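/- Let 0 < γ ≤ δ ≤ 1/9 and let ω be the explicit modulus of continuity ω(ξ) = ξ − ξ^{3/2} for 0 ≤ ξ ≤ δ and ω(ξ) = δ − δ^{3/2} + γ log(1 + (1/4) log(ξ/δ)) for ξ > δ; for B > 0 set ω_B(ξ) = ω(Bξ). Let 0 ≤ T < T₁ and let Θ : ℝ² × [0,T₁] → ℝ be continuous, 2π-periodic in each space variable, such that the spatial gradient ∇Θ exists everywhere and is jointly continuous on ℝ² × [0,T₁]. Assume that Θ(·,T) has strict modulus of continuity ω_B, i.e. |Θ(x,T) − Θ(y,T)| < ω_B(|x−y|) for all x ≠ y, and that sup_{x∈ℝ²} |∇Θ(x,T)| < B. Then there exists τ ∈ (0, T₁ − T] such that for every t ∈ [T, T+τ], Θ(·,t) has strict modulus of continuity ω_B. -/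

import Mathlib

open Real

noncomputable section

abbrev Plane := EuclideanSpace ℝ (Fin 2)

/-- `2π`-periodicity in each variable. -/
def Periodic2 {α : Type*} (f : Plane → α) : Prop :=
  ∀ (x : Plane) (i : Fin 2), f (x + (2 * Real.pi) • EuclideanSpace.single i (1:ℝ)) = f x

/-- The explicit modulus of continuity of Kiselev–Nazarov–Volberg:
`ω(ξ) = ξ − ξ^{3/2}` for `0 ≤ ξ ≤ δ`, and
`ω(ξ) = δ − δ^{3/2} + γ log(1 + (1/4) log(ξ/δ))` for `ξ > δ`. -/
def qgModulus (γ δ : ℝ) (ξ : ℝ) : ℝ :=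
  if ξ ≤ δ then ξ - ξ ^ ((3:ℝ)/2)
  else δ - δ ^ ((3:ℝ)/2) + γ * Real.log (1 + (1/4) * Real.log (ξ / δ))

open Real Set

lemma qg_cont (γ δ : ℝ) (hδ0 : 0 < δ) {a : ℝ} (ha : 0 < a) :
    ContinuousAt (qgModulus γ δ) a := by
  have hf : Continuous (fun ξ : ℝ => ξ - ξ ^ ((3:ℝ)/2)) := by
    apply continuous_id.sub
    exact Real.continuous_rpow_const (by norm_num)
  have hg : ∀ b : ℝ, δ ≤ b → ContinuousAt
      (fun ξ : ℝ => δ - δ ^ ((3:ℝ)/2) + γ * Real.log (1 + (1/4) * Real.log (ξ / δ))) b := by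
    intro b hb
    have hb0 : 0 < b := lt_of_lt_of_le hδ0 hb
    have h1 : (1:ℝ) ≤ b / δ := (one_le_div hδ0).2 hb
    have hlog : ContinuousAt (fun ξ : ℝ => Real.log (ξ / δ)) b :=
      (Real.continuousAt_log (by positivity)).comp ((continuousAt_id).div_const δ)
    have hinner : ContinuousAt (fun ξ : ℝ => 1 + (1/4) * Real.log (ξ / δ)) b :=
      continuousAt_const.add (continuousAt_const.mul hlog)
    have hne : 1 + (1/4) * Real.log (b / δ) ≠ 0 := by
      have : 0 ≤ Real.log (b / δ) := Real.log_nonneg h1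
      positivity
    exact continuousAt_const.add (continuousAt_const.mul (hinner.log hne))
  have hval : qgModulus γ δ δ
      = δ - δ ^ ((3:ℝ)/2) + γ * Real.log (1 + (1/4) * Real.log (δ / δ)) := by
    rw [qgModulus, if_pos le_rfl, div_self hδ0.ne', Real.log_one]
    norm_num
  rcases lt_trichotomy a δ with h | h | h
  · exact hf.continuousAt.congr <| Filter.eventuallyEq_of_mem (Iio_mem_nhds h)
      (fun ξ hξ => (if_pos (le_of_lt hξ)).symm)
  · subst h
    rw [← continuousWithinAt_univ, ← Set.Iic_union_Ici (a := a)]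
    apply ContinuousWithinAt.union
    · exact (hf.continuousAt.continuousWithinAt).congr
        (fun ξ hξ => if_pos hξ) (if_pos le_rfl)
    · refine ((hg a le_rfl).continuousWithinAt).congr (fun ξ hξ => ?_) hval
      rcases eq_or_lt_of_le (Set.mem_Ici.mp hξ) with h' | h'
      · rw [← h', hval]
      · rw [qgModulus, if_neg (not_le.2 h')]
  · exact (hg a h.le).congr <| Filter.eventuallyEq_of_mem (Ioi_mem_nhds h)
      (fun ξ hξ => (if_neg (not_le.2 hξ)).symm)

lemma shift_int {α : Type*} (f : Plane → α) (v : Plane) (h : ∀ x, f (x + v) = f x) :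
    ∀ (n : ℤ) (x : Plane), f (x + (n : ℝ) • v) = f x := by
  intro n
  induction n using Int.induction_on with
  | zero => simp
  | succ k ih =>
    intro x
    have heq : x + (((k : ℤ) + 1 : ℤ) : ℝ) • v = (x + ((k : ℤ) : ℝ) • v) + v := by
      push_cast; rw [add_smul, one_smul, add_assoc]
    rw [heq, h, ih]
  | pred k ih =>
    intro x
    have h' : ∀ z : Plane, f (z - v) = f z := by
      intro z
      have := h (z - v)
      rw [sub_add_cancel] at this
      exact this.symm
    have heq : x + ((-(k : ℤ) - 1 : ℤ) : ℝ) • v = (x + ((-(k : ℤ) : ℤ) : ℝ) • v) - v := by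
      push_cast; rw [sub_smul, one_smul, add_sub_assoc]
    rw [heq, h', ih]

lemma exists_shift (x : Plane) : ∃ w : Plane,
    ‖x - w‖ ≤ 9 ∧ ∀ {α : Type*} (f : Plane → α), Periodic2 f → ∀ z : Plane, f (z - w) = f z := by
  set m : Fin 2 → ℤ := fun j => ⌊x j / (2 * Real.pi)⌋ with hm
  set v : Fin 2 → Plane := fun i => (2 * Real.pi) • EuclideanSpace.single i (1:ℝ) with hv
  refine ⟨((m 0 : ℝ)) • v 0 + ((m 1 : ℝ)) • v 1, ?_, ?_⟩
  · have hπ : 0 < 2 * Real.pi := by positivity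
    have hcoord : ∀ j : Fin 2, |(x - (((m 0 : ℝ)) • v 0 + ((m 1 : ℝ)) • v 1)) j| ≤ 2 * Real.pi := by
      intro j
      have hval : (x - (((m 0 : ℝ)) • v 0 + ((m 1 : ℝ)) • v 1)) j
          = x j - 2 * Real.pi * (m j : ℝ) := by
        fin_cases j <;>
          simp [hv, PiLp.sub_apply, PiLp.add_apply, PiLp.smul_apply,
            EuclideanSpace.single_apply, smul_eq_mul] <;> ring
      rw [hval]
      have h1 : (m j : ℝ) ≤ x j / (2 * Real.pi) := Int.floor_le _
      have h2 : x j / (2 * Real.pi) < (m j : ℝ) + 1 := Int.lt_floor_add_one _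
      rw [abs_le]
      have hA := (le_div_iff₀ hπ).1 h1
      have hB := (div_le_iff₀ hπ).1 (le_of_lt h2)
      constructor <;> nlinarith
    rw [EuclideanSpace.norm_eq]
    have h9 : Real.sqrt 81 = 9 := by
      rw [show (81:ℝ) = 9 ^ 2 by norm_num, Real.sqrt_sq (by norm_num)]
    rw [← h9]
    apply Real.sqrt_le_sqrt
    have hπ' : 2 * Real.pi ≤ 6.3 := by nlinarith [Real.pi_lt_d2]
    have hsq : ∀ j : Fin 2, ‖(x - (((m 0 : ℝ)) • v 0 + ((m 1 : ℝ)) • v 1)) j‖ ^ 2 ≤ 40 := by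
      intro j
      have := hcoord j
      have habs : |(x - (((m 0 : ℝ)) • v 0 + ((m 1 : ℝ)) • v 1)) j| ≤ 6.3 := le_trans this hπ'
      rw [Real.norm_eq_abs]
      nlinarith [abs_nonneg ((x - (((m 0 : ℝ)) • v 0 + ((m 1 : ℝ)) • v 1)) j)]
    calc ∑ j : Fin 2, ‖(x - (((m 0 : ℝ)) • v 0 + ((m 1 : ℝ)) • v 1)) j‖ ^ 2
        ≤ ∑ _j : Fin 2, (40:ℝ) := Finset.sum_le_sum (fun j _ => hsq j)
      _ ≤ 81 := by simp; norm_num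
  · intro α f hf z
    have h0 : ∀ z : Plane, f (z + ((-(m 0) : ℤ) : ℝ) • v 0) = f z :=
      fun z => shift_int f (v 0) (fun x => hf x 0) (-(m 0)) z
    have h1 : ∀ z : Plane, f (z + ((-(m 1) : ℤ) : ℝ) • v 1) = f z :=
      fun z => shift_int f (v 1) (fun x => hf x 1) (-(m 1)) z
    have : z - (((m 0 : ℝ)) • v 0 + ((m 1 : ℝ)) • v 1)
        = (z + ((-(m 0) : ℤ) : ℝ) • v 0) + ((-(m 1) : ℤ) : ℝ) • v 1 := by
      push_cast; module
    rw [this, h1, h0]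

set_option maxHeartbeats 2000000 in
/-- Short-time persistence of the strict modulus of continuity `ω_B(ξ) = ω(Bξ)`:
if `Θ(·,T)` has strict modulus `ω_B` and `sup_x |∇Θ(x,T)| < B`, then for some `τ > 0`
the function `Θ(·,t)` has strict modulus `ω_B` for all `t ∈ [T, T+τ]`. -/
theorem strict_modulus_short_time_persistence
    (γ δ : ℝ) (hγ : 0 < γ) (hγδ : γ ≤ δ) (hδ : δ ≤ 1/9)
    (B : ℝ) (hB : 0 < B)
    (T T₁ : ℝ) (hT : 0 ≤ T) (hTT₁ : T < T₁)
    (Θ : Plane → ℝ → ℝ)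
    (hcont : ContinuousOn (fun p : Plane × ℝ => Θ p.1 p.2) (Set.univ ×ˢ Set.Icc 0 T₁))
    (hper : ∀ t ∈ Set.Icc (0:ℝ) T₁, Periodic2 (fun x => Θ x t))
    (hdiff : ∀ x : Plane, ∀ t ∈ Set.Icc (0:ℝ) T₁, DifferentiableAt ℝ (fun y => Θ y t) x)
    (hgradcont : ContinuousOn (fun p : Plane × ℝ => fderiv ℝ (fun y => Θ y p.2) p.1)
      (Set.univ ×ˢ Set.Icc 0 T₁))
    (hmodT : ∀ x y : Plane, x ≠ y → |Θ x T - Θ y T| < qgModulus γ δ (B * ‖x - y‖))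
    (hgradT : (⨆ x : Plane, ‖fderiv ℝ (fun y => Θ y T) x‖) < B) :
    ∃ τ : ℝ, 0 < τ ∧ τ ≤ T₁ - T ∧
      ∀ t ∈ Set.Icc T (T + τ), ∀ x y : Plane, x ≠ y →
        |Θ x t - Θ y t| < qgModulus γ δ (B * ‖x - y‖) := by
  have hδ0 : 0 < δ := lt_of_lt_of_le hγ hγδ
  have hTmem : T ∈ Set.Icc (0:ℝ) T₁ := ⟨hT, hTT₁.le⟩
  set D : Plane → ℝ → (Plane →L[ℝ] ℝ) := fun x t => fderiv ℝ (fun y => Θ y t) x with hD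
  -- gradient is periodic
  have hDper : ∀ t ∈ Set.Icc (0:ℝ) T₁, Periodic2 (fun x => D x t) := by
    intro t ht x i
    set v : Plane := (2 * Real.pi) • EuclideanSpace.single i (1:ℝ) with hv
    have hfe : (fun y => Θ (y + v) t) = (fun y => Θ y t) := funext (fun y => hper t ht y i)
    have hDx : HasFDerivAt (fun y => Θ y t) (D (x + v) t) (x + v) :=
      (hdiff _ t ht).hasFDerivAt
    have hinner : HasFDerivAt (fun y : Plane => y + v) (ContinuousLinearMap.id ℝ Plane) x := by
      simpa using (hasFDerivAt_id x).add_const v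
    have hcomp : HasFDerivAt (fun y => Θ (y + v) t) (D (x + v) t) x := by
      have := hDx.comp x hinner
      simpa [Function.comp_def] using this
    rw [hfe] at hcomp
    exact hcomp.fderiv.symm
  have hKcpt : IsCompact (Metric.closedBall (0:Plane) 9) := isCompact_closedBall _ _
  -- bound on the gradient at time T : the sup is a genuine bound
  obtain ⟨CD, hCD⟩ := (hKcpt.prod isCompact_Icc).exists_bound_of_continuousOn
    (hgradcont.mono (by intro p hp; exact ⟨Set.mem_univ _, hp.2⟩))
  have hDle : ∀ (x : Plane) (t : ℝ), t ∈ Set.Icc (0:ℝ) T₁ → ‖D x t‖ ≤ CD := by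
    intro x t ht
    obtain ⟨w, hw9, hwf⟩ := exists_shift x
    have := hwf (fun z => D z t) (hDper t ht) x
    rw [← this]
    exact hCD (x - w, t) ⟨by simpa [Metric.mem_closedBall, dist_zero_right] using hw9, ht⟩
  have hBdd : BddAbove (Set.range fun x : Plane => ‖D x T‖) := by
    refine ⟨CD, ?_⟩
    rintro _ ⟨x, rfl⟩
    exact hDle x T hTmem
  set M : ℝ := ⨆ x : Plane, ‖D x T‖ with hM
  have hDT : ∀ x : Plane, ‖D x T‖ ≤ M := fun x => le_ciSup hBdd x
  have hM0 : 0 ≤ M := le_trans (norm_nonneg _) (hDT 0)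
  set B' : ℝ := (M + B) / 2 with hB'
  have hMB : M < B := hgradT
  have hMB' : M < B' := by rw [hB']; linarith
  have hB'B : B' < B := by rw [hB']; linarith
  have hB'0 : 0 ≤ B' := by rw [hB']; linarith
  -- bound on Θ
  obtain ⟨C, hC⟩ := (hKcpt.prod isCompact_Icc).exists_bound_of_continuousOn
    (hcont.mono (by intro p hp; exact ⟨Set.mem_univ _, hp.2⟩))
  have hΘle : ∀ (x : Plane) (t : ℝ), t ∈ Set.Icc (0:ℝ) T₁ → |Θ x t| ≤ C := by
    intro x t ht
    obtain ⟨w, hw9, hwf⟩ := exists_shift x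
    have := hwf (fun z => Θ z t) (hper t ht) x
    rw [← this, ← Real.norm_eq_abs]
    exact hC (x - w, t) ⟨by simpa [Metric.mem_closedBall, dist_zero_right] using hw9, ht⟩
  have hC0 : 0 ≤ C := le_trans (abs_nonneg _) (hΘle 0 T hTmem)
  -- tail radius R
  set R : ℝ := (δ / B) * Real.exp (4 * Real.exp ((2 * C + 1) / γ)) with hR
  have hR0 : 0 < R := by positivity
  have hBR : B * R = δ * Real.exp (4 * Real.exp ((2 * C + 1) / γ)) := by
    rw [hR]; field_simp
  have hBRδ : δ < B * R := by
    rw [hBR]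
    nth_rewrite 1 [← mul_one δ]
    exact mul_lt_mul_of_pos_left (Real.one_lt_exp_iff.2 (by positivity)) hδ0
  have hδpow : δ ^ ((3:ℝ)/2) ≤ δ := by
    nth_rewrite 2 [← Real.rpow_one δ]
    exact Real.rpow_le_rpow_of_exponent_ge hδ0 (by linarith) (by norm_num)
  have htail : ∀ ξ : ℝ, R ≤ ξ → 2 * C < qgModulus γ δ (B * ξ) := by
    intro ξ hξ
    have hBξ : δ < B * ξ := lt_of_lt_of_le hBRδ (by nlinarith)
    rw [qgModulus, if_neg (not_le.2 hBξ)]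
    have hlog1 : Real.log (B * R / δ) = 4 * Real.exp ((2 * C + 1) / γ) := by
      rw [hBR, mul_div_cancel_left₀ _ hδ0.ne', Real.log_exp]
    have hlogle : Real.log (B * R / δ) ≤ Real.log (B * ξ / δ) := by
      apply Real.log_le_log (by positivity)
      gcongr
    have hkey : Real.exp ((2 * C + 1) / γ) < 1 + (1/4) * Real.log (B * ξ / δ) := by
      have : Real.exp ((2 * C + 1) / γ) = (1/4) * Real.log (B * R / δ) := by
        rw [hlog1]; ring
      nlinarith
    have hloggt : (2 * C + 1) / γ < Real.log (1 + (1/4) * Real.log (B * ξ / δ)) := by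
      calc (2 * C + 1) / γ = Real.log (Real.exp ((2 * C + 1) / γ)) := (Real.log_exp _).symm
        _ < _ := Real.log_lt_log (Real.exp_pos _) hkey
    have : 2 * C + 1 < γ * Real.log (1 + (1/4) * Real.log (B * ξ / δ)) := by
      rw [div_lt_iff₀ hγ] at hloggt
      linarith [hloggt]
    linarith
  -- near-diagonal radius ξ₀
  set q : ℝ := (B - B') / (2 * B) with hq
  have hq0 : 0 < q := by rw [hq]; exact div_pos (by linarith) (by positivity)
  set ξ₀ : ℝ := (min δ (q ^ 2)) / B with hξ₀
  have hξ₀0 : 0 < ξ₀ := by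
    rw [hξ₀]
    apply div_pos (lt_min hδ0 (by positivity)) hB
  have hnear : ∀ ξ : ℝ, 0 < ξ → ξ ≤ ξ₀ → B' * ξ < qgModulus γ δ (B * ξ) := by
    intro ξ hξpos hξle
    set u : ℝ := B * ξ with hu
    have hu0 : 0 < u := by positivity
    have humin : u ≤ min δ (q ^ 2) := by
      rw [hu]
      calc B * ξ ≤ B * ξ₀ := mul_le_mul_of_nonneg_left hξle hB.le
        _ = min δ (q ^ 2) := by rw [hξ₀]; field_simp
    have huδ : u ≤ δ := le_trans humin (min_le_left _ _)
    rw [qgModulus, if_pos huδ]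
    have hsplit : u ^ ((3:ℝ)/2) = u * u ^ ((1:ℝ)/2) := by
      rw [show (3:ℝ)/2 = 1 + 1/2 by norm_num, Real.rpow_add hu0, Real.rpow_one]
    have hroot : u ^ ((1:ℝ)/2) ≤ q := by
      have h1 : u ^ ((1:ℝ)/2) ≤ (q ^ 2) ^ ((1:ℝ)/2) :=
        Real.rpow_le_rpow hu0.le (le_trans humin (min_le_right _ _)) (by norm_num)
      have h2 : (q ^ 2) ^ ((1:ℝ)/2) = q := by
        rw [← Real.rpow_natCast q 2, ← Real.rpow_mul hq0.le]
        norm_num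
      rwa [h2] at h1
    have hrootnn : 0 ≤ u ^ ((1:ℝ)/2) := Real.rpow_nonneg hu0.le _
    rw [hsplit]
    have hmul : u * u ^ ((1:ℝ)/2) ≤ u * q := mul_le_mul_of_nonneg_left hroot hu0.le
    have : u * q = ξ * (B - B') / 2 := by
      rw [hu, hq]; field_simp
    nlinarith [hmul, this]
  -- fixed-time continuity of Θ(·,T)
  have hΘTcont : Continuous (fun x : Plane => Θ x T) := by
    rw [← continuousOn_univ]
    exact ContinuousOn.comp hcont
      ((continuous_id.prodMk continuous_const).continuousOn)
      (fun x _ => ⟨Set.mem_univ _, hTmem⟩)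
  -- the medium-range compact set and minimum
  set S : Set (Plane × Plane) :=
    (Metric.closedBall (0:Plane) 9 ×ˢ Metric.closedBall (0:Plane) (9 + R)) ∩
      {p : Plane × Plane | ξ₀ ≤ ‖p.1 - p.2‖} with hS
  have hScpt : IsCompact S :=
    (hKcpt.prod (isCompact_closedBall _ _)).inter_right
      (isClosed_le continuous_const (continuous_fst.sub continuous_snd).norm)
  set G : Plane × Plane → ℝ :=
    fun p => qgModulus γ δ (B * ‖p.1 - p.2‖) - |Θ p.1 T - Θ p.2 T| with hG
  have hGcont : ContinuousOn G S := by
    apply ContinuousOn.sub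
    · apply ContinuousOn.comp (t := Set.Ioi (0:ℝ))
        (fun a ha => (qg_cont γ δ hδ0 ha).continuousWithinAt)
        ((continuous_const.mul (continuous_fst.sub continuous_snd).norm).continuousOn)
      intro p hp
      have h2 : ξ₀ ≤ ‖p.1 - p.2‖ := hp.2
      exact Set.mem_Ioi.2 (mul_pos hB (lt_of_lt_of_le hξ₀0 h2))
    · exact (((hΘTcont.comp continuous_fst).sub (hΘTcont.comp continuous_snd)).abs).continuousOn
  have hSpos : ∀ p ∈ S, 0 < G p := by
    intro p hp
    have hne : p.1 ≠ p.2 := by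
      intro h
      have : ξ₀ ≤ ‖p.1 - p.2‖ := hp.2
      rw [h, sub_self, norm_zero] at this
      linarith
    exact sub_pos.2 (hmodT p.1 p.2 hne)
  obtain ⟨ε, hε0, hεle⟩ : ∃ ε > 0, ∀ p ∈ S, ε ≤ G p := by
    rcases Set.eq_empty_or_nonempty S with h | h
    · exact ⟨1, one_pos, by simp [h]⟩
    · obtain ⟨p₀, hp₀, hmin⟩ := hScpt.exists_isMinOn h hGcont
      exact ⟨G p₀, hSpos _ hp₀, fun p hp => hmin hp⟩
  -- eventually-in-time control near T
  set Y := Set.Icc (0:ℝ) T₁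
  set y₀ : Y := ⟨T, hTmem⟩ with hy₀
  have hF1 : Continuous (fun s : Y × Plane => ‖fderiv ℝ (fun y => Θ y (s.1 : ℝ)) s.2‖) := by
    apply Continuous.norm
    exact ContinuousOn.comp_continuous hgradcont
      (continuous_snd.prodMk (continuous_subtype_val.comp continuous_fst))
      (fun s => ⟨Set.mem_univ _, s.1.2⟩)
  have hF2 : Continuous (fun s : Y × Plane => |Θ s.2 (s.1 : ℝ) - Θ s.2 T|) := by
    apply Continuous.abs
    apply Continuous.sub
    · exact ContinuousOn.comp_continuous hcont
        (continuous_snd.prodMk (continuous_subtype_val.comp continuous_fst))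
        (fun s => ⟨Set.mem_univ _, s.1.2⟩)
    · exact hΘTcont.comp continuous_snd
  have hev : ∀ᶠ s : Y in nhds y₀, ∀ z ∈ Metric.closedBall (0:Plane) (9 + R),
      ‖D z (s : ℝ)‖ < B' ∧ |Θ z (s : ℝ) - Θ z T| < ε / 3 := by
    apply (isCompact_closedBall (0:Plane) (9 + R)).eventually_forall_of_forall_eventually
    intro z _
    have h1 : ∀ᶠ p : Y × Plane in nhds (y₀, z), ‖fderiv ℝ (fun y => Θ y (p.1 : ℝ)) p.2‖ < B' := by
      have hval : ‖fderiv ℝ (fun y => Θ y ((y₀ : Y) : ℝ)) z‖ < B' := lt_of_le_of_lt (hDT z) hMB'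
      exact (hF1.continuousAt).eventually_lt continuousAt_const hval
    have h2 : ∀ᶠ p : Y × Plane in nhds (y₀, z), |Θ p.2 (p.1 : ℝ) - Θ p.2 T| < ε / 3 := by
      have hval : |Θ z ((y₀ : Y) : ℝ) - Θ z T| < ε / 3 := by
        simp only [hy₀]
        rw [sub_self, abs_zero]
        positivity
      exact (hF2.continuousAt).eventually_lt continuousAt_const hval
    filter_upwards [h1, h2] with p hp1 hp2
    exact ⟨hp1, hp2⟩
  obtain ⟨η, hη0, hη⟩ := Metric.eventually_nhds_iff.1 hev
  -- choice of τ
  refine ⟨min (η / 2) (T₁ - T), lt_min (by positivity) (by linarith), min_le_right _ _, ?_⟩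
  intro t ht x y hxy
  have htmem : t ∈ Set.Icc (0:ℝ) T₁ := by
    constructor
    · linarith [ht.1]
    · have := ht.2
      have h2 : T + min (η / 2) (T₁ - T) ≤ T₁ := by
        have := min_le_right (η / 2) (T₁ - T); linarith
      linarith
  set s : Y := ⟨t, htmem⟩ with hs
  have hdist : dist s y₀ < η := by
    rw [Subtype.dist_eq, Real.dist_eq, abs_of_nonneg (by linarith [ht.1])]
    have h1 := ht.2
    have h2 := min_le_left (η / 2) (T₁ - T)
    simp only [hy₀]
    linarith
  have hPt := hη hdist
  -- global gradient bound at time t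
  have hDall : ∀ z : Plane, ‖D z t‖ ≤ B' := by
    intro z
    obtain ⟨w, hw9, hwf⟩ := exists_shift z
    have heq := hwf (fun z' => D z' t) (hDper t htmem) z
    rw [← heq]
    have hz' : z - w ∈ Metric.closedBall (0:Plane) (9 + R) := by
      rw [Metric.mem_closedBall, dist_zero_right]
      linarith
    exact (hPt (z - w) hz').1.le
  have hξpos : 0 < ‖x - y‖ := by
    rw [norm_pos_iff]
    exact sub_ne_zero.2 hxy
  rcases le_or_gt ‖x - y‖ ξ₀ with hcase1 | hcase1
  · -- near-diagonal: mean value theorem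
    have hmvt : ‖Θ x t - Θ y t‖ ≤ B' * ‖x - y‖ := by
      have := convex_univ.norm_image_sub_le_of_norm_fderiv_le
        (f := fun z => Θ z t) (C := B')
        (fun z _ => hdiff z t htmem) (fun z _ => hDall z)
        (Set.mem_univ y) (Set.mem_univ x)
      simpa [norm_sub_rev] using this
    calc |Θ x t - Θ y t| ≤ B' * ‖x - y‖ := hmvt
      _ < qgModulus γ δ (B * ‖x - y‖) := hnear _ hξpos hcase1
  · rcases le_or_gt R ‖x - y‖ with hcase2 | hcase2
    · -- far range
      have h1 : |Θ x t - Θ y t| ≤ 2 * C := by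
        have ha := hΘle x t htmem
        have hb := hΘle y t htmem
        calc |Θ x t - Θ y t| ≤ |Θ x t| + |Θ y t| := abs_sub _ _
          _ ≤ 2 * C := by linarith
      exact lt_of_le_of_lt h1 (htail _ hcase2)
    · -- medium range : reduce to the fundamental domain
      obtain ⟨w, hw9, hwf⟩ := exists_shift x
      have hd : (x - w) - (y - w) = x - y := by abel
      have hy' : ‖y - w‖ ≤ 9 + R := by
        have h1 : ‖y - w‖ ≤ ‖x - w‖ + ‖(x - w) - (y - w)‖ := by
          have := norm_sub_le (x - w) ((x - w) - (y - w))
          simpa using this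
        rw [hd] at h1
        linarith [hcase2.le]
      have hxw : x - w ∈ Metric.closedBall (0:Plane) (9 + R) := by
        rw [Metric.mem_closedBall, dist_zero_right]; linarith
      have hyw : y - w ∈ Metric.closedBall (0:Plane) (9 + R) := by
        rw [Metric.mem_closedBall, dist_zero_right]; linarith
      have hmemS : ((x - w), (y - w)) ∈ S := by
        refine ⟨⟨?_, hyw⟩, ?_⟩
        · rw [Metric.mem_closedBall, dist_zero_right]; exact hw9
        · simp only [Set.mem_setOf_eq]
          rw [hd]
          exact hcase1.le
      have hGS := hεle _ hmemS
      rw [hG] at hGS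
      simp only at hGS
      rw [hd] at hGS
      have hx't : Θ (x - w) t = Θ x t := hwf (fun z => Θ z t) (hper t htmem) x
      have hy't : Θ (y - w) t = Θ y t := hwf (fun z => Θ z t) (hper t htmem) y
      have hx'T : Θ (x - w) T = Θ x T := hwf (fun z => Θ z T) (hper T hTmem) x
      have hy'T : Θ (y - w) T = Θ y T := hwf (fun z => Θ z T) (hper T hTmem) y
      have hcl1 : |Θ (x - w) t - Θ (x - w) T| < ε / 3 := (hPt (x - w) hxw).2
      have hcl2 : |Θ (y - w) t - Θ (y - w) T| < ε / 3 := (hPt (y - w) hyw).2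
      have htri : |Θ x t - Θ y t| ≤ |Θ (x - w) t - Θ (x - w) T|
          + |Θ (x - w) T - Θ (y - w) T| + |Θ (y - w) t - Θ (y - w) T| := by
        rw [← hx't, ← hy't]
        calc |Θ (x - w) t - Θ (y - w) t|
            ≤ |Θ (x - w) t - Θ (y - w) T| + |Θ (y - w) T - Θ (y - w) t| := abs_sub_le _ _ _
          _ ≤ (|Θ (x - w) t - Θ (x - w) T| + |Θ (x - w) T - Θ (y - w) T|)
              + |Θ (y - w) T - Θ (y - w) t| := by
                have := abs_sub_le (Θ (x - w) t) (Θ (x - w) T) (Θ (y - w) T)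
                linarith
          _ = _ := by rw [abs_sub_comm (Θ (y - w) T)]
      have hmid : |Θ (x - w) T - Θ (y - w) T|
          ≤ qgModulus γ δ (B * ‖x - y‖) - ε := by linarith
      linarith
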